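/- Let μ and ν be probability measures on {0,1}^E for a finite set E, and suppose μ strongly stochastically dominates ν, meaning: for every E' ⊆ E and every ξ ⪯ ξ' in {0,1}^{E'} with ν[ω|_{E'} = ξ] > 0 and μ[ω|_{E'} = ξ'] > 0, the conditional measure ν[·|ω|_{E'} = ξ] is stochastically dominated by μ[·|ω|_{E'} = ξ']. Then the exploration coupling (revealing edges one at a time in a fixed order, using shared i.i.d. uniform random variables (U_e)_{e∈E} and thresholding by the conditional probabilities) produces samples ω^ν ~ ν and ω^μ ~ μ with ω^ν ⪯ ω^μ almost surely. -/
import Mathlib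


open scoped Classical
open MeasureTheory

/-- Conditional probability under `ν` that edge `j` is open given that the edges
`i < j` take the values prescribed by `ω`. -/
noncomputable def condProb {n : ℕ} (ν : (Fin n → Bool) → ℝ) (j : Fin n)
    (ω : Fin n → Bool) : ℝ :=
  (∑ b : Fin n → Bool,
      if (∀ i : Fin n, i < j → b i = ω i) ∧ b j = true then ν b else 0) /
  (∑ b : Fin n → Bool, if (∀ i : Fin n, i < j → b i = ω i) then ν b else 0)

/-- Partial exploration history of the exploration coupling. -/
noncomputable def hist {n : ℕ} (ν : (Fin n → Bool) → ℝ) (u : Fin n → ℝ) :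
    ℕ → (Fin n → Bool)
  | 0 => fun _ => false
  | (j + 1) => fun i =>
      if i.val = j then
        (if u i ≤ condProb ν i (hist ν u j) then true else false)
      else hist ν u j i

/-- The exploration sample associated to `ν` and the uniforms `u`. -/
noncomputable def explore {n : ℕ} (ν : (Fin n → Bool) → ℝ) (u : Fin n → ℝ) :
    Fin n → Bool := hist ν u n

/-- An event is increasing if it is upwards closed for the pointwise order. -/
def IncreasingEvent {n : ℕ} (U : Set (Fin n → Bool)) : Prop :=
  ∀ a b : Fin n → Bool, (∀ i, a i ≤ b i) → a ∈ U → b ∈ U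

/-- `μ` strongly stochastically dominates `ν`: conditioning `ν` on a smaller
restriction and `μ` on a larger one preserves stochastic domination. -/
def StrongDom {n : ℕ} (ν μ : (Fin n → Bool) → ℝ) : Prop :=
  ∀ E' : Finset (Fin n), ∀ ξ ξ' : Fin n → Bool, (∀ i ∈ E', ξ i ≤ ξ' i) →
    0 < (∑ b : Fin n → Bool, if (∀ i ∈ E', b i = ξ i) then ν b else 0) →
    0 < (∑ b : Fin n → Bool, if (∀ i ∈ E', b i = ξ' i) then μ b else 0) →
    ∀ U : Set (Fin n → Bool), IncreasingEvent U →
      (∑ b : Fin n → Bool, if b ∈ U ∧ (∀ i ∈ E', b i = ξ i) then ν b else 0) /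
          (∑ b : Fin n → Bool, if (∀ i ∈ E', b i = ξ i) then ν b else 0)
        ≤ (∑ b : Fin n → Bool, if b ∈ U ∧ (∀ i ∈ E', b i = ξ' i) then μ b else 0) /
          (∑ b : Fin n → Bool, if (∀ i ∈ E', b i = ξ' i) then μ b else 0)

noncomputable def Dfun {n : ℕ} (ν : (Fin n → Bool) → ℝ) (u : Fin n → ℝ) (k : ℕ) : ℝ :=
  ∑ b : Fin n → Bool, if (∀ i : Fin n, i.val < k → b i = hist ν u k i) then ν b else 0

noncomputable def Numf {n : ℕ} (ν : (Fin n → Bool) → ℝ) (u : Fin n → ℝ) (k : ℕ) (hk : k < n) : ℝ :=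
  ∑ b : Fin n → Bool, if (∀ i : Fin n, i.val < k → b i = hist ν u k i) ∧ b ⟨k, hk⟩ = true then ν b else 0

lemma sum_if_nonneg {n : ℕ} (ν : (Fin n → Bool) → ℝ) (hν0 : ∀ b, 0 ≤ ν b)
    (P : (Fin n → Bool) → Prop) :
    0 ≤ ∑ b : Fin n → Bool, if P b then ν b else 0 := by
  apply Finset.sum_nonneg; intro b _; by_cases h : P b <;> simp [h, hν0 b]

lemma sum_if_split {n : ℕ} (ν : (Fin n → Bool) → ℝ) (P : (Fin n → Bool) → Prop) (j : Fin n) :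
    (∑ b : Fin n → Bool, if P b then ν b else 0)
      = (∑ b : Fin n → Bool, if P b ∧ b j = true then ν b else 0)
        + (∑ b : Fin n → Bool, if P b ∧ b j = false then ν b else 0) := by
  rw [← Finset.sum_add_distrib]
  apply Finset.sum_congr rfl
  intro b _
  by_cases h : P b <;> cases hb : b j <;> simp [h, hb]

lemma hist_succ_ne {n : ℕ} (ν : (Fin n → Bool) → ℝ) (u : Fin n → ℝ) (k : ℕ) (i : Fin n)
    (h : i.val ≠ k) : hist ν u (k+1) i = hist ν u k i := by
  simp [hist, h]

lemma hist_succ_eq {n : ℕ} (ν : (Fin n → Bool) → ℝ) (u : Fin n → ℝ) (k : ℕ) (hk : k < n) :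
    hist ν u (k+1) ⟨k, hk⟩
      = (if u ⟨k, hk⟩ ≤ condProb ν ⟨k, hk⟩ (hist ν u k) then true else false) := by
  simp [hist]

lemma condProb_eq {n : ℕ} (ν : (Fin n → Bool) → ℝ) (u : Fin n → ℝ) (k : ℕ) (hk : k < n) :
    condProb ν ⟨k, hk⟩ (hist ν u k) = Numf ν u k hk / Dfun ν u k := by
  rfl

lemma Dfun_succ {n : ℕ} (ν : (Fin n → Bool) → ℝ) (u : Fin n → ℝ) (k : ℕ) (hk : k < n) :
    Dfun ν u (k+1) = ∑ b : Fin n → Bool,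
      if (∀ i : Fin n, i.val < k → b i = hist ν u k i) ∧ b ⟨k, hk⟩ = hist ν u (k+1) ⟨k, hk⟩
      then ν b else 0 := by
  unfold Dfun
  apply Finset.sum_congr rfl; intro b _
  apply if_congr _ rfl rfl
  constructor
  · intro H
    refine ⟨fun i hi => ?_, H ⟨k, hk⟩ (Nat.lt_succ_self k)⟩
    rw [H i (Nat.lt_succ_of_lt hi), hist_succ_ne ν u k i (Nat.ne_of_lt hi)]
  · rintro ⟨H1, H2⟩ i hi
    rcases Nat.lt_succ_iff_lt_or_eq.mp hi with h | h
    · rw [H1 i h, hist_succ_ne ν u k i (Nat.ne_of_lt h)]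
    · have : i = ⟨k, hk⟩ := Fin.ext h
      rw [this]; exact H2

lemma condProb_mono {n : ℕ} (ν μ : (Fin n → Bool) → ℝ) (hdom : StrongDom ν μ)
    (u : Fin n → ℝ) (k : ℕ) (hk : k < n)
    (hDν : 0 < Dfun ν u k) (hDμ : 0 < Dfun μ u k)
    (hmono : ∀ i, hist ν u k i ≤ hist μ u k i) :
    condProb ν ⟨k, hk⟩ (hist ν u k) ≤ condProb μ ⟨k, hk⟩ (hist μ u k) := by
  classical
  set E' : Finset (Fin n) := Finset.univ.filter (fun i => i.val < k) with hE'
  have hmem : ∀ i : Fin n, i ∈ E' ↔ i.val < k := by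
    intro i; simp [hE']
  have hconv : ∀ (ρ : (Fin n → Bool) → ℝ) (ξ : Fin n → Bool),
      (∑ b : Fin n → Bool, if (∀ i ∈ E', b i = ξ i) then ρ b else 0)
        = ∑ b : Fin n → Bool, if (∀ i : Fin n, i.val < k → b i = ξ i) then ρ b else 0 := by
    intro ρ ξ
    apply Finset.sum_congr rfl; intro b _
    apply if_congr _ rfl rfl
    constructor
    · intro H i hi; exact H i ((hmem i).2 hi)
    · intro H i hi; exact H i ((hmem i).1 hi)
  set U : Set (Fin n → Bool) := {b | b ⟨k, hk⟩ = true} with hU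
  have hUinc : IncreasingEvent U := by
    intro a b hab ha
    have := hab ⟨k, hk⟩
    simp only [hU, Set.mem_setOf_eq] at ha ⊢
    rw [ha] at this
    cases hb : b ⟨k, hk⟩
    · rw [hb] at this; exact absurd this (by decide)
    · rfl
  have hUiff : ∀ b : Fin n → Bool, b ∈ U ↔ b ⟨k, hk⟩ = true := fun b => Iff.rfl
  clear_value U
  clear hU
  have hconvU : ∀ (ρ : (Fin n → Bool) → ℝ) (ξ : Fin n → Bool),
      (∑ b : Fin n → Bool, if b ∈ U ∧ (∀ i ∈ E', b i = ξ i) then ρ b else 0)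
        = ∑ b : Fin n → Bool,
            if (∀ i : Fin n, i.val < k → b i = ξ i) ∧ b ⟨k, hk⟩ = true then ρ b else 0 := by
    intro ρ ξ
    apply Finset.sum_congr rfl; intro b _
    apply if_congr _ rfl rfl
    constructor
    · rintro ⟨h1, h2⟩; exact ⟨fun i hi => h2 i ((hmem i).2 hi), (hUiff b).1 h1⟩
    · rintro ⟨h1, h2⟩; exact ⟨(hUiff b).2 h2, fun i hi => h1 i ((hmem i).1 hi)⟩
  have key := hdom E' (hist ν u k) (hist μ u k) (fun i _ => hmono i)
    (by rw [hconv]; exact hDν) (by rw [hconv]; exact hDμ) U hUinc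
  rw [hconv ν (hist ν u k), hconv μ (hist μ u k), hconvU ν (hist ν u k),
    hconvU μ (hist μ u k)] at key
  rw [condProb_eq ν u k hk, condProb_eq μ u k hk]
  exact key

lemma Dfun_zero {n : ℕ} (ν : (Fin n → Bool) → ℝ) (hν1 : ∑ b, ν b = 1) (u : Fin n → ℝ) :
    Dfun ν u 0 = 1 := by
  unfold Dfun
  rw [← hν1]
  apply Finset.sum_congr rfl; intro b _
  rw [if_pos]
  intro i hi; exact absurd hi (Nat.not_lt_zero _)

/-- Positivity of the next denominator, for a single measure. -/
lemma Dfun_succ_pos {n : ℕ} (ν : (Fin n → Bool) → ℝ) (hν0 : ∀ b, 0 ≤ ν b)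
    (u : Fin n → ℝ) (k : ℕ) (hk : k < n) (hu0 : 0 < u ⟨k, hk⟩) (hu1 : u ⟨k, hk⟩ ≤ 1)
    (hD : 0 < Dfun ν u k) : 0 < Dfun ν u (k + 1) := by
  set j : Fin n := ⟨k, hk⟩ with hj
  set p := condProb ν j (hist ν u k) with hp
  have hpdef : p = Numf ν u k hk / Dfun ν u k := condProb_eq ν u k hk
  have hNum : Numf ν u k hk = p * Dfun ν u k := by
    rw [hpdef, div_mul_cancel₀ _ (ne_of_gt hD)]
  have hsplit : Dfun ν u k = Numf ν u k hk + ∑ b : Fin n → Bool,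
      (if (∀ i : Fin n, i.val < k → b i = hist ν u k i) ∧ b j = false then ν b else 0) := by
    unfold Dfun Numf
    rw [← Finset.sum_add_distrib]
    apply Finset.sum_congr rfl
    intro b _
    by_cases h : (∀ i : Fin n, i.val < k → b i = hist ν u k i) <;> cases hb : b j <;>
      simp [h, hb, hj]
  rw [Dfun_succ ν u k hk, hist_succ_eq ν u k hk]
  by_cases hc : u j ≤ p
  · rw [if_pos hc]
    have : (∑ b : Fin n → Bool,
        if (∀ i : Fin n, i.val < k → b i = hist ν u k i) ∧ b j = true then ν b else 0)
        = Numf ν u k hk := rfl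
    rw [this, hNum]
    exact mul_pos (lt_of_lt_of_le hu0 hc) hD
  · rw [if_neg hc]
    have hfalse : (∑ b : Fin n → Bool,
        if (∀ i : Fin n, i.val < k → b i = hist ν u k i) ∧ b j = false then ν b else 0)
        = Dfun ν u k - Numf ν u k hk := by
      linarith [hsplit]
    rw [hfalse, hNum]
    have hp1 : p < 1 := lt_of_lt_of_le (lt_of_not_ge hc) hu1
    nlinarith

lemma key_induction {n : ℕ} (ν μ : (Fin n → Bool) → ℝ)
    (hν0 : ∀ b, 0 ≤ ν b) (hν1 : ∑ b, ν b = 1)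
    (hμ0 : ∀ b, 0 ≤ μ b) (hμ1 : ∑ b, μ b = 1)
    (hdom : StrongDom ν μ) (u : Fin n → ℝ) (hu : ∀ j, u j ∈ Set.Ioc (0 : ℝ) 1) :
    ∀ k : ℕ, k ≤ n →
      0 < Dfun ν u k ∧ 0 < Dfun μ u k ∧ ∀ i, hist ν u k i ≤ hist μ u k i := by
  intro k
  induction k with
  | zero =>
    intro _
    refine ⟨by rw [Dfun_zero ν hν1 u]; norm_num, by rw [Dfun_zero μ hμ1 u]; norm_num, ?_⟩
    intro i; exact le_refl _
  | succ k ih =>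
    intro hk1
    have hk : k < n := Nat.lt_of_succ_le hk1
    obtain ⟨hDν, hDμ, hmono⟩ := ih (Nat.le_of_lt hk)
    have hu0 := (hu ⟨k, hk⟩).1
    have hu1 := (hu ⟨k, hk⟩).2
    refine ⟨Dfun_succ_pos ν hν0 u k hk hu0 hu1 hDν,
      Dfun_succ_pos μ hμ0 u k hk hu0 hu1 hDμ, ?_⟩
    have hpq := condProb_mono ν μ hdom u k hk hDν hDμ hmono
    intro i
    by_cases h : i.val = k
    · have hi : i = ⟨k, hk⟩ := Fin.ext h
      rw [hi, hist_succ_eq ν u k hk, hist_succ_eq μ u k hk]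
      by_cases hc : u ⟨k, hk⟩ ≤ condProb ν ⟨k, hk⟩ (hist ν u k)
      · rw [if_pos hc, if_pos (le_trans hc hpq)]
      · rw [if_neg hc]; exact Bool.false_le _
    · rw [hist_succ_ne ν u k i h, hist_succ_ne μ u k i h]
      exact hmono i

/-- If `μ` strongly stochastically dominates `ν`, the exploration coupling (with
shared uniforms) produces `ω^ν ⪯ ω^μ` almost surely. -/
theorem stmt11 {n : ℕ} (ν μ : (Fin n → Bool) → ℝ)
    (hν0 : ∀ b, 0 ≤ ν b) (hν1 : ∑ b, ν b = 1)
    (hμ0 : ∀ b, 0 ≤ μ b) (hμ1 : ∑ b, μ b = 1)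
    (hdom : StrongDom ν μ) :
    ∀ᵐ u ∂(Measure.pi fun _ : Fin n => volume.restrict (Set.Icc (0 : ℝ) 1)),
      ∀ i : Fin n, explore ν u i ≤ explore μ u i := by
  have hgood : ∀ᵐ u ∂(Measure.pi fun _ : Fin n => volume.restrict (Set.Icc (0 : ℝ) 1)),
      ∀ j : Fin n, u j ∈ Set.Ioc (0 : ℝ) 1 := by
    rw [MeasureTheory.ae_all_iff]
    intro j
    have hnull : (volume.restrict (Set.Icc (0 : ℝ) 1)) (Set.Ioc (0 : ℝ) 1)ᶜ = 0 := by
      rw [Measure.restrict_apply measurableSet_Ioc.compl]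
      have hset : (Set.Ioc (0 : ℝ) 1)ᶜ ∩ Set.Icc 0 1 = {(0 : ℝ)} := by
        ext x
        simp only [Set.mem_inter_iff, Set.mem_compl_iff, Set.mem_Ioc, Set.mem_Icc,
          Set.mem_singleton_iff, not_and, not_le]
        constructor
        · rintro ⟨h1, h2, h3⟩
          by_contra hx
          have : 0 < x := lt_of_le_of_ne h2 (Ne.symm hx)
          linarith [h1 this]
        · rintro rfl; norm_num
      rw [hset]
      exact Real.volume_singleton
    have := Measure.pi_eval_preimage_null
      (μ := fun _ : Fin n => volume.restrict (Set.Icc (0 : ℝ) 1)) (i := j) hnull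
    rw [MeasureTheory.ae_iff]
    exact this
  filter_upwards [hgood] with u hu
  intro i
  exact (key_induction ν μ hν0 hν1 hμ0 hμ1 hdom u hu n le_rfl).2.2 i
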